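/- For every y ∈ ℝ, the least-squares solution on the training set augmented by the test pair (x, y), θ̂(y) := (XᵀX + x xᵀ)⁻¹(XᵀY + x y), has test residual y − x⊤θ̂(y) = (y − x⊤θ_N) / (1 + x⊤(XᵀX)⁻¹x). -/

import Mathlib

open Matrix

lemma vecMulVec_mulVec' {M : ℕ} (x v : Fin M → ℝ) :
    (vecMulVec x x) *ᵥ v = (x ⬝ᵥ v) • x := by
  ext i
  simp [vecMulVec, mulVec, dotProduct, Finset.mul_sum, mul_comm, mul_left_comm]

/-- Test residual of the least-squares solution on the training set augmented by `(x, y)`: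
`y − xᵀθ̂(y) = (y − xᵀθ_N) / (1 + xᵀ(XᵀX)⁻¹x)`. -/
theorem augmented_ls_residual {N M : ℕ}
    (X : Matrix (Fin N) (Fin M) ℝ) (Y : Fin N → ℝ) (x : Fin M → ℝ)
    (hX : IsUnit (Xᵀ * X).det)
    (θN : Fin M → ℝ) (hθN : θN = (Xᵀ * X)⁻¹.mulVec (Xᵀ.mulVec Y))
    (y : ℝ)
    (θhat : Fin M → ℝ)
    (hθhat : θhat = (Xᵀ * X + vecMulVec x x)⁻¹.mulVec (Xᵀ.mulVec Y + y • x)) :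
    y - x ⬝ᵥ θhat = (y - x ⬝ᵥ θN) / (1 + x ⬝ᵥ (Xᵀ * X)⁻¹.mulVec x) := by
  set A := Xᵀ * X with hA
  -- A is positive semidefinite
  have hApsd : A.PosSemidef := by
    have := posSemidef_conjTranspose_mul_self X
    simpa [conjTranspose_eq_transpose_of_trivial, A] using this
  -- A is positive definite
  have hApd : A.PosDef := by
    refine PosDef.of_dotProduct_mulVec_pos hApsd.1 (fun v hv => ?_)
    rcases lt_or_eq_of_le (hApsd.dotProduct_mulVec_nonneg v) with h | h
    · simpa using h
    · exfalso
      have h0 : A *ᵥ v = 0 := by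
        have := (hApsd.dotProduct_mulVec_zero_iff v).mp ?_
        · exact this
        · simpa using h.symm
      have hinj : Function.Injective (A.mulVec) :=
        Matrix.mulVec_injective_iff_isUnit.2 ((Matrix.isUnit_iff_isUnit_det A).2 hX)
      exact hv (hinj (by simpa using h0))
  -- vecMulVec x x is PSD
  have hxx : (vecMulVec x x).PosSemidef := by
    refine PosSemidef.of_dotProduct_mulVec_nonneg ?_ (fun v => ?_)
    · ext i j; simp [vecMulVec, mul_comm]
    · rw [vecMulVec_mulVec']
      simp only [star_trivial, dotProduct_smul, smul_eq_mul, RCLike.re_to_real]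
      have : x ⬝ᵥ v = v ⬝ᵥ x := dotProduct_comm _ _
      rw [this]
      exact mul_self_nonneg _
  have hBpd : (A + vecMulVec x x).PosDef := hApd.add_posSemidef hxx
  set B := A + vecMulVec x x with hB
  have hBunit : IsUnit B.det := hBpd.det_pos.ne'.isUnit
  -- c = x ⬝ A⁻¹ x ≥ 0
  set c : ℝ := x ⬝ᵥ A⁻¹.mulVec x with hc
  have hcnn : 0 ≤ c := by
    have := hApd.inv.posSemidef.dotProduct_mulVec_nonneg x
    simpa [hc] using this
  have h1c : (0:ℝ) < 1 + c := by linarith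
  have h1c' : (1:ℝ) + c ≠ 0 := h1c.ne'
  set u := A⁻¹ *ᵥ x with hu
  set t : ℝ := (y - x ⬝ᵥ θN) / (1 + c) with ht
  -- A *ᵥ u = x, A *ᵥ θN = XᵀY
  have hAinv : A * A⁻¹ = 1 := Matrix.mul_nonsing_inv A hX
  have hAu : A *ᵥ u = x := by
    rw [hu, Matrix.mulVec_mulVec, hAinv, Matrix.one_mulVec]
  have hAθN : A *ᵥ θN = Xᵀ *ᵥ Y := by
    rw [hθN, Matrix.mulVec_mulVec, hAinv, Matrix.one_mulVec]
  -- B *ᵥ (θN + t • u) = XᵀY + y • x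
  have hkey : B *ᵥ (θN + t • u) = Xᵀ *ᵥ Y + y • x := by
    rw [hB, Matrix.add_mulVec, Matrix.mulVec_add, Matrix.mulVec_add,
      Matrix.mulVec_smul, Matrix.mulVec_smul, hAu, hAθN,
      vecMulVec_mulVec', vecMulVec_mulVec']
    have ht' : t * (1 + c) = y - x ⬝ᵥ θN := by
      rw [ht]; field_simp
    have hy : y = t + (x ⬝ᵥ θN) + t * (x ⬝ᵥ u) := by
      rw [← hc]; nlinarith [ht']
    rw [hy]
    module
  -- θhat = θN + t • u
  have hθ : θhat = θN + t • u := by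
    rw [hθhat, ← hkey, Matrix.mulVec_mulVec,
      Matrix.nonsing_inv_mul B hBunit, Matrix.one_mulVec]
  rw [hθ]
  have : x ⬝ᵥ (θN + t • u) = x ⬝ᵥ θN + t * c := by
    rw [dotProduct_add, dotProduct_smul]
    rfl
  rw [this]
  have ht' : t * (1 + c) = y - x ⬝ᵥ θN := by
    rw [ht]; field_simp
  linarith [ht']
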